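/- Let H be a real N×p matrix with spectral norm ρ_H (largest singular value), let y ∈ ℝ^N, let s ∈ ℝ^p, and let 0 < μ ≤ 1/ρ_H². If ŝ minimizes ‖t - s - μ·Hᵀ(y - H s)‖₂² over all t in a set S containing s, then ‖y - H ŝ‖₂² ≤ ‖y - H s‖₂². -/

import Mathlib

open Matrix Finset Filter

/-- Squared Euclidean norm of a vector. -/
def sqNorm {n : Type*} [Fintype n] (v : n → ℝ) : ℝ := ∑ i, (v i)^2

/-- Spectral norm (largest singular value) of a real matrix,
as the operator 2-norm of the associated Euclidean linear map. -/
noncomputable def specNorm {m n : Type*} [Fintype m] [Fintype n] [DecidableEq n]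
    (H : Matrix m n ℝ) : ℝ :=
  ‖LinearMap.toContinuousLinearMap (Matrix.toEuclideanLin H)‖

/-- Number of nonzero entries (ℓ₀ "norm") of a vector. -/
noncomputable def l0 {n : Type*} [Fintype n] (v : n → ℝ) : ℕ :=
  (Set.toFinite (Function.support v)).toFinset.card

/-- `w` is a hard-thresholding of `v` at sparsity level `r`: `w` agrees with `v`
on a set `S` of `min r p` indices of largest magnitude and is zero elsewhere. -/
def IsHardThreshold {n : Type*} [Fintype n] (r : ℕ) (v w : n → ℝ) : Prop :=
  ∃ S : Finset n, S.card = min r (Fintype.card n) ∧ (∀ i ∈ S, w i = v i) ∧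
    (∀ i ∉ S, w i = 0) ∧ ∀ i ∈ S, ∀ j ∉ S, |v j| ≤ |v i|

lemma sqNorm_sub {n : Type*} [Fintype n] (u v : n → ℝ) :
    sqNorm (u - v) = sqNorm u - 2 * (u ⬝ᵥ v) + sqNorm v := by
  simp only [sqNorm, dotProduct, Pi.sub_apply, sub_sq, Finset.sum_add_distrib,
    Finset.sum_sub_distrib, Finset.mul_sum]
  ring

lemma sqNorm_nonneg {n : Type*} [Fintype n] (v : n → ℝ) : 0 ≤ sqNorm v :=
  Finset.sum_nonneg fun i _ => sq_nonneg _

lemma sqNorm_eq_norm_sq {n : Type*} [Fintype n] (v : n → ℝ) :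
    sqNorm v = ‖(WithLp.equiv 2 (n → ℝ)).symm v‖ ^ 2 := by
  rw [EuclideanSpace.norm_eq, Real.sq_sqrt (Finset.sum_nonneg fun i _ => sq_nonneg _)]
  simp [sqNorm, WithLp.equiv, sq_abs]

lemma sqNorm_mulVec_le {m n : Type*} [Fintype m] [Fintype n] [DecidableEq n]
    (H : Matrix m n ℝ) (v : n → ℝ) :
    sqNorm (H.mulVec v) ≤ specNorm H ^ 2 * sqNorm v := by
  rw [sqNorm_eq_norm_sq, sqNorm_eq_norm_sq, ← mul_pow]
  have h := (LinearMap.toContinuousLinearMap (Matrix.toEuclideanLin H)).le_opNorm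
    ((WithLp.equiv 2 (n → ℝ)).symm v)
  have he : (LinearMap.toContinuousLinearMap (Matrix.toEuclideanLin H))
      ((WithLp.equiv 2 (n → ℝ)).symm v) = (WithLp.equiv 2 (m → ℝ)).symm (H.mulVec v) := rfl
  rw [he] at h
  exact pow_le_pow_left₀ (norm_nonneg _) h 2

theorem stmt_0 {N p : ℕ} (H : Matrix (Fin N) (Fin p) ℝ) (y : Fin N → ℝ)
    (s sh : Fin p → ℝ) (μ : ℝ) (hμ0 : 0 < μ) (hμ : μ ≤ 1 / (specNorm H)^2)
    (S : Set (Fin p → ℝ)) (hsS : s ∈ S) (hshS : sh ∈ S)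
    (hmin : ∀ t ∈ S,
      sqNorm (sh - (s + μ • H.transpose.mulVec (y - H.mulVec s))) ≤
      sqNorm (t - (s + μ • H.transpose.mulVec (y - H.mulVec s)))) :
    sqNorm (y - H.mulVec sh) ≤ sqNorm (y - H.mulVec s) := by
  set b : Fin N → ℝ := y - H.mulVec s with hb
  set d : Fin p → ℝ := sh - s with hd
  set g : Fin p → ℝ := μ • H.transpose.mulVec b with hg
  -- spectral norm positivity
  have hρ : 0 < specNorm H ^ 2 := by
    by_contra h
    push_neg at h
    have h0 : specNorm H ^ 2 = 0 := le_antisymm h (sq_nonneg _)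
    rw [h0] at hμ
    simp at hμ
    linarith
  have hμρ : μ * specNorm H ^ 2 ≤ 1 := by
    rw [le_div_iff₀ hρ] at hμ
    linarith
  -- minimality at t = s
  have h1 := hmin s hsS
  have hs : s - (s + g) = -g := by ring
  have hsh : sh - (s + g) = d - g := by rw [hd]; ring
  rw [hs, hsh] at h1
  have hng : sqNorm (-g) = sqNorm g := by simp [sqNorm]
  rw [hng, sqNorm_sub] at h1
  -- h1 : sqNorm d - 2 * (d ⬝ᵥ g) + sqNorm g ≤ sqNorm g
  have h2 : sqNorm d ≤ 2 * (d ⬝ᵥ g) := by linarith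
  -- d ⬝ᵥ g = μ * (H.mulVec d ⬝ᵥ b)
  have h3 : d ⬝ᵥ g = μ * ((H.mulVec d) ⬝ᵥ b) := by
    rw [hg]
    rw [dotProduct_smul, Matrix.dotProduct_mulVec, Matrix.vecMul_transpose,
      smul_eq_mul]
  have h4 : sqNorm d ≤ 2 * μ * ((H.mulVec d) ⬝ᵥ b) := by
    rw [h3] at h2; linarith
  -- spectral bound
  have h5 : sqNorm (H.mulVec d) ≤ specNorm H ^ 2 * sqNorm d := sqNorm_mulVec_le H d
  have h6 : μ * sqNorm (H.mulVec d) ≤ sqNorm d := by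
    calc μ * sqNorm (H.mulVec d) ≤ μ * (specNorm H ^ 2 * sqNorm d) := by
          exact mul_le_mul_of_nonneg_left h5 hμ0.le
      _ = (μ * specNorm H ^ 2) * sqNorm d := by ring
      _ ≤ 1 * sqNorm d := mul_le_mul_of_nonneg_right hμρ (sqNorm_nonneg d)
      _ = sqNorm d := one_mul _
  have h7 : sqNorm (H.mulVec d) ≤ 2 * ((H.mulVec d) ⬝ᵥ b) := by
    have := h4
    nlinarith [hμ0]
  -- final expansion
  have hfin : y - H.mulVec sh = b - H.mulVec d := by
    rw [hb, hd, Matrix.mulVec_sub]; ring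
  rw [hfin]
  have hexp : sqNorm (b - H.mulVec d) =
      sqNorm b - 2 * (b ⬝ᵥ H.mulVec d) + sqNorm (H.mulVec d) := sqNorm_sub b _
  have hcomm : b ⬝ᵥ H.mulVec d = (H.mulVec d) ⬝ᵥ b := by
    simp [dotProduct, mul_comm]
  rw [hexp, hcomm]
  linarith
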